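/- arXiv:1011.5281 — 2 statements merged into one kernel-verified Lean document; each statement's English description precedes it below -/
import Mathlib

section
/- Let X be a normed space, p > 1, and G : X → ℝ a C¹ functional such that ⟨G'(u) - G'(v), u - v⟩ ≥ (‖u‖^{p-1} - ‖v‖^{p-1})(‖u‖ - ‖v‖) for all u, v ∈ X. If (uₙ) converges weakly to u in X and ⟨G'(uₙ), uₙ - u⟩ → 0, then ‖uₙ‖ → ‖u‖. -/
open Filter Real

lemma key_lem {q a : ℝ} (hq : 0 < q) (ha : 0 ≤ a) (t : ℕ → ℝ) (ht : ∀ n, 0 ≤ t n)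
    (h : Tendsto (fun n => (t n ^ q - a ^ q) * (t n - a)) atTop (nhds 0)) :
    Tendsto t atTop (nhds a) := by
  rw [Metric.tendsto_atTop]
  intro ε hε
  have hδ1 : 0 < ((a + ε) ^ q - a ^ q) * ε := by
    apply mul_pos _ hε
    have := Real.rpow_lt_rpow ha (lt_add_of_pos_right a hε) hq
    linarith
  set δ2 : ℝ := if ε ≤ a then (a ^ q - (a - ε) ^ q) * ε else ((a + ε) ^ q - a ^ q) * ε
    with hδ2def
  have hδ2 : 0 < δ2 := by
    rw [hδ2def]
    split_ifs with hc
    · apply mul_pos _ hε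
      have := Real.rpow_lt_rpow (by linarith : (0:ℝ) ≤ a - ε) (sub_lt_self a hε) hq
      linarith
    · exact hδ1
  rw [Metric.tendsto_atTop] at h
  obtain ⟨N, hN⟩ := h (min (((a + ε) ^ q - a ^ q) * ε) δ2) (lt_min hδ1 hδ2)
  refine ⟨N, fun n hn => ?_⟩
  have hNn := hN n hn
  rw [Real.dist_eq, sub_zero] at hNn
  rw [Real.dist_eq]
  by_contra hcon
  push_neg at hcon
  have habs := le_abs_self ((t n ^ q - a ^ q) * (t n - a))
  have hmin1 : min (((a + ε) ^ q - a ^ q) * ε) δ2 ≤ ((a + ε) ^ q - a ^ q) * ε :=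
    min_le_left _ _
  have hmin2 : min (((a + ε) ^ q - a ^ q) * ε) δ2 ≤ δ2 := min_le_right _ _
  rcases le_abs.mp hcon with hc | hc
  · -- t n ≥ a + ε
    have h1 : (a + ε) ^ q ≤ t n ^ q := Real.rpow_le_rpow (by linarith) (by linarith) hq.le
    have h2 : a ^ q < (a + ε) ^ q := Real.rpow_lt_rpow ha (by linarith) hq
    have hle : ((a + ε) ^ q - a ^ q) * ε ≤ (t n ^ q - a ^ q) * (t n - a) :=
      mul_le_mul (by linarith) (by linarith) hε.le (by linarith)
    linarith
  · -- t n ≤ a - ε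
    have htn := ht n
    have hεa : ε ≤ a := by linarith
    rw [if_pos hεa] at hδ2def
    have h1 : t n ^ q ≤ (a - ε) ^ q := Real.rpow_le_rpow htn (by linarith) hq.le
    have h2 : (a - ε) ^ q < a ^ q := Real.rpow_lt_rpow (by linarith) (by linarith) hq
    have hle : (a ^ q - (a - ε) ^ q) * ε ≤ (a ^ q - t n ^ q) * (a - t n) :=
      mul_le_mul (by linarith) (by linarith) hε.le (by linarith)
    have heq : (t n ^ q - a ^ q) * (t n - a) = (a ^ q - t n ^ q) * (a - t n) := by ring
    rw [heq] at habs
    rw [heq, hδ2def] at hNn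
    rw [hδ2def] at hmin2
    linarith

theorem stmt5 {X : Type*} [NormedAddCommGroup X] [NormedSpace ℝ X]
    (p : ℝ) (hp : 1 < p) (G' : X → X →L[ℝ] ℝ)
    (hmono : ∀ u v : X,
      (‖u‖ ^ (p - 1) - ‖v‖ ^ (p - 1)) * (‖u‖ - ‖v‖) ≤ (G' u - G' v) (u - v))
    (u : ℕ → X) (l : X)
    (hweak : ∀ f : X →L[ℝ] ℝ, Filter.Tendsto (fun n => f (u n)) Filter.atTop (nhds (f l)))
    (hG : Filter.Tendsto (fun n => G' (u n) (u n - l)) Filter.atTop (nhds 0)) :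
    Filter.Tendsto (fun n => ‖u n‖) Filter.atTop (nhds ‖l‖) := by
  have hq : 0 < p - 1 := by linarith
  apply key_lem hq (norm_nonneg l) _ (fun n => norm_nonneg (u n))
  -- G' l (u n - l) → 0
  have hGl : Tendsto (fun n => G' l (u n - l)) atTop (nhds 0) := by
    have := (hweak (G' l)).sub (tendsto_const_nhds (x := G' l l))
    simpa [map_sub] using this
  have hsum : Tendsto (fun n => G' (u n) (u n - l) - G' l (u n - l)) atTop (nhds 0) := by
    simpa using hG.sub hGl
  refine squeeze_zero (g := fun n => G' (u n) (u n - l) - G' l (u n - l)) ?_ ?_ hsum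
  · intro n
    rcases le_total ‖u n‖ ‖l‖ with hle | hle
    · have h1 : ‖u n‖ ^ (p - 1) ≤ ‖l‖ ^ (p - 1) :=
        Real.rpow_le_rpow (norm_nonneg _) hle hq.le
      nlinarith
    · have h1 : ‖l‖ ^ (p - 1) ≤ ‖u n‖ ^ (p - 1) :=
        Real.rpow_le_rpow (norm_nonneg _) hle hq.le
      exact mul_nonneg (by linarith) (by linarith)
  · intro n
    have h1 := hmono (u n) l
    have h2 : (G' (u n) - G' l) (u n - l) = G' (u n) (u n - l) - G' l (u n - l) := by
      simp
    exact le_of_le_of_eq h1 h2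
end

section
/- Let E ⊆ ℝⁿ be measurable, 1 ≤ α, β < ∞, and h : E × ℝ → ℝ a Carathéodory function such that for every ε > 0 there exists a_ε ∈ L^β(E) with |h(x,s)| ≤ a_ε(x) + ε|s|^{α/β} for a.e. x ∈ E and all s ∈ ℝ. If (u_k) is bounded in L^α(E) and converges to u almost everywhere in E, then h(·,u_k(·)) converges to h(·,u(·)) strongly in L^β(E). -/
open MeasureTheory NNReal Filter
open scoped ENNReal Topology

lemma simpleFunc_comp_measurable {γ : Type*} [MeasurableSpace γ]
    (h : γ → ℝ → ℝ) (hmeas : ∀ s : ℝ, Measurable fun x => h x s)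
    (s : SimpleFunc γ ℝ) : Measurable fun x => h x (s x) := by
  have heq : (fun x => h x (s x)) =
      fun x => ∑ y ∈ s.range, Set.indicator (s ⁻¹' {y}) (fun x => h x y) x := by
    funext x
    rw [Finset.sum_eq_single (s x)]
    · simp
    · intro b _ hb
      apply Set.indicator_of_notMem
      simp [hb.symm]
    · intro hx; exact absurd (s.mem_range_self x) hx
  rw [heq]
  exact Finset.measurable_sum _ fun y _ =>
    (hmeas y).indicator (s.measurableSet_preimage {y})

lemma caratheodory_aemeasurable {γ : Type*} [MeasurableSpace γ] {μ : Measure γ}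
    (h : γ → ℝ → ℝ) (hmeas : ∀ s : ℝ, Measurable fun x => h x s)
    (hcont : ∀ᵐ x ∂μ, Continuous fun s => h x s)
    {w : γ → ℝ} (hw : AEMeasurable w μ) :
    AEMeasurable (fun x => h x (w x)) μ := by
  set w' := hw.mk w with hw'def
  have hw'm : Measurable w' := hw.measurable_mk
  have hsm : StronglyMeasurable w' := hw'm.stronglyMeasurable
  have key : AEMeasurable (fun x => h x (w' x)) μ := by
    apply aemeasurable_of_tendsto_metrizable_ae atTop
      (f := fun m x => h x (hsm.approx m x))
      (fun m => (simpleFunc_comp_measurable h hmeas (hsm.approx m)).aemeasurable)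
    filter_upwards [hcont] with x hx
    exact (hx.tendsto (w' x)).comp (hsm.tendsto_approx x)
  apply key.congr
  filter_upwards [hw.ae_eq_mk] with x hx
  rw [← hw'def] at hx
  rw [hx]

theorem stmt6 {n : ℕ} (E : Set (Fin n → ℝ)) (hE : MeasurableSet E)
    (α β : ℝ) (hα : 1 ≤ α) (hβ : 1 ≤ β)
    (h : (Fin n → ℝ) → ℝ → ℝ)
    (hmeas : ∀ s : ℝ, Measurable fun x => h x s)
    (hcont : ∀ᵐ x ∂(volume.restrict E), Continuous fun s => h x s)
    (hgrowth : ∀ ε > (0:ℝ), ∃ a : (Fin n → ℝ) → ℝ,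
      MemLp a (ENNReal.ofReal β) (volume.restrict E) ∧
      ∀ᵐ x ∂(volume.restrict E), ∀ s : ℝ, |h x s| ≤ a x + ε * |s| ^ (α / β))
    (u : ℕ → (Fin n → ℝ) → ℝ) (v : (Fin n → ℝ) → ℝ)
    (humeas : ∀ k, AEMeasurable (u k) (volume.restrict E))
    (hbdd : ∃ C : ℝ≥0, ∀ k, eLpNorm (u k) (ENNReal.ofReal α) (volume.restrict E) ≤ C)
    (hae : ∀ᵐ x ∂(volume.restrict E),
      Filter.Tendsto (fun k => u k x) Filter.atTop (nhds (v x))) :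
    Filter.Tendsto
      (fun k => eLpNorm (fun x => h x (u k x) - h x (v x)) (ENNReal.ofReal β)
        (volume.restrict E))
      Filter.atTop (nhds 0) := by
  classical
  set μ := volume.restrict E with hμdef
  have hβ0 : (0:ℝ) < β := lt_of_lt_of_le one_pos hβ
  have hα0 : (0:ℝ) < α := lt_of_lt_of_le one_pos hα
  have hp0 : ENNReal.ofReal β ≠ 0 := by simp only [ne_eq, ENNReal.ofReal_eq_zero]; linarith
  have hpt : ENNReal.ofReal β ≠ ∞ := ENNReal.ofReal_ne_top
  have hpR : (ENNReal.ofReal β).toReal = β := ENNReal.toReal_ofReal hβ0.le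
  have hq0 : ENNReal.ofReal α ≠ 0 := by simp only [ne_eq, ENNReal.ofReal_eq_zero]; linarith
  have hqt : ENNReal.ofReal α ≠ ∞ := ENNReal.ofReal_ne_top
  have hqR : (ENNReal.ofReal α).toReal = α := ENNReal.toReal_ofReal hα0.le
  obtain ⟨C, hC⟩ := hbdd
  have hv : AEMeasurable v μ := aemeasurable_of_tendsto_metrizable_ae atTop humeas hae
  have hhu : ∀ k, AEMeasurable (fun x => h x (u k x)) μ :=
    fun k => caratheodory_aemeasurable h hmeas hcont (humeas k)
  have hhv : AEMeasurable (fun x => h x (v x)) μ :=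
    caratheodory_aemeasurable h hmeas hcont hv
  set F : ℕ → ℝ≥0∞ := fun k => ∫⁻ x, (‖h x (u k x) - h x (v x)‖₊ : ℝ≥0∞) ^ β ∂μ with hFdef
  have hd_meas : ∀ k, AEMeasurable
      (fun x => (‖h x (u k x) - h x (v x)‖₊ : ℝ≥0∞) ^ β) μ :=
    fun k => ((hhu k).sub hhv).enorm.pow aemeasurable_const
  have hu_meas : ∀ k, AEMeasurable (fun x => (‖u k x‖₊ : ℝ≥0∞) ^ α) μ :=
    fun k => (humeas k).enorm.pow aemeasurable_const
  have hv_meas : AEMeasurable (fun x => (‖v x‖₊ : ℝ≥0∞) ^ α) μ :=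
    hv.enorm.pow aemeasurable_const
  have hCα : ((C : ℝ≥0∞)) ^ α ≠ ∞ :=
    (ENNReal.rpow_lt_top_of_nonneg hα0.le ENNReal.coe_ne_top).ne
  set c0 : ℝ≥0∞ := (2:ℝ≥0∞) ^ (β - 1) with hc0def
  have hc0_ne : c0 ≠ ∞ :=
    (ENNReal.rpow_lt_top_of_nonneg (by linarith) ENNReal.ofNat_ne_top).ne
  have hIk : ∀ k, ∫⁻ x, (‖u k x‖₊ : ℝ≥0∞) ^ α ∂μ ≤ (C:ℝ≥0∞) ^ α := by
    intro k
    have h1 := hC k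
    rw [eLpNorm_eq_lintegral_rpow_enorm_toReal hq0 hqt, hqR] at h1
    calc ∫⁻ x, (‖u k x‖₊ : ℝ≥0∞) ^ α ∂μ
        = ((∫⁻ x, (‖u k x‖₊ : ℝ≥0∞) ^ α ∂μ) ^ (1/α)) ^ α := by
          rw [← ENNReal.rpow_mul, one_div, inv_mul_cancel₀ hα0.ne', ENNReal.rpow_one]
      _ ≤ ((C:ℝ≥0∞)) ^ α := ENNReal.rpow_le_rpow h1 hα0.le
  have huconv : ∀ᵐ x ∂μ, Tendsto (fun k => (‖u k x‖₊ : ℝ≥0∞) ^ α) atTop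
      (𝓝 ((‖v x‖₊ : ℝ≥0∞) ^ α)) := by
    filter_upwards [hae] with x hx
    exact (ENNReal.continuous_rpow_const.tendsto _).comp
      (ENNReal.tendsto_coe.2 ((continuous_nnnorm.tendsto _).comp hx))
  set Iv := ∫⁻ x, (‖v x‖₊ : ℝ≥0∞) ^ α ∂μ with hIvdef
  have hIv : Iv ≤ (C:ℝ≥0∞) ^ α := by
    have h1 : Iv ≤ liminf (fun k => ∫⁻ x, (‖u k x‖₊ : ℝ≥0∞) ^ α ∂μ) atTop := by
      refine le_trans (le_of_eq (lintegral_congr_ae ?_)) (lintegral_liminf_le' hu_meas)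
      filter_upwards [huconv] with x hx
      exact hx.liminf_eq.symm
    refine h1.trans ((liminf_le_liminf (Filter.Eventually.of_forall hIk)).trans ?_)
    simp [liminf_const]
  have hIv_ne : Iv ≠ ∞ := ne_top_of_le_ne_top hCα hIv
  -- key estimate
  have hkey : ∀ ε : ℝ, 0 < ε → limsup F atTop ≤
      c0 * c0 * ((ENNReal.ofReal ε) ^ β * (C:ℝ≥0∞) ^ α) := by
    intro ε hε
    obtain ⟨a, ha_mem, ha_bd⟩ := hgrowth ε hε
    have ha_meas : AEMeasurable a μ := ha_mem.aestronglyMeasurable.aemeasurable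
    set ε' : ℝ≥0∞ := ENNReal.ofReal ε with hε'def
    have hε'β_ne : ε' ^ β ≠ ∞ :=
      (ENNReal.rpow_lt_top_of_nonneg hβ0.le ENNReal.ofReal_ne_top).ne
    set Ia := ∫⁻ x, (‖a x‖₊ : ℝ≥0∞) ^ β ∂μ with hIadef
    have ha_pm : AEMeasurable (fun x => (‖a x‖₊ : ℝ≥0∞) ^ β) μ :=
      ha_meas.enorm.pow aemeasurable_const
    have hIa_ne : Ia ≠ ∞ := by
      have h2 := ha_mem.2
      rw [eLpNorm_eq_lintegral_rpow_enorm_toReal hp0 hpt, hpR] at h2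
      exact ((ENNReal.rpow_lt_top_iff_of_pos (by positivity)).1 h2).ne
    have hγβ : α / β * β = α := div_mul_cancel₀ α hβ0.ne'
    have hptw : ∀ᵐ x ∂μ, ∀ s : ℝ,
        (‖h x s‖₊ : ℝ≥0∞) ≤ (‖a x‖₊ : ℝ≥0∞) + ε' * (‖s‖₊ : ℝ≥0∞) ^ (α/β) := by
      filter_upwards [ha_bd] with x hx s
      have h1 : |h x s| ≤ |a x| + ε * |s| ^ (α/β) :=
        (hx s).trans (by gcongr; exact le_abs_self _)
      calc (‖h x s‖₊ : ℝ≥0∞) = ENNReal.ofReal |h x s| := Real.enorm_eq_ofReal_abs _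
        _ ≤ ENNReal.ofReal (|a x| + ε * |s| ^ (α/β)) := ENNReal.ofReal_le_ofReal h1
        _ = ENNReal.ofReal |a x| + ENNReal.ofReal (ε * |s| ^ (α/β)) :=
            ENNReal.ofReal_add (abs_nonneg _) (by positivity)
        _ = (‖a x‖₊ : ℝ≥0∞) + ε' * (‖s‖₊ : ℝ≥0∞) ^ (α/β) := by
            rw [ENNReal.ofReal_mul hε.le,
              ← ENNReal.ofReal_rpow_of_nonneg (abs_nonneg _) (by positivity),
              ← Real.enorm_eq_ofReal_abs, ← Real.enorm_eq_ofReal_abs,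
              enorm_eq_nnnorm, enorm_eq_nnnorm]
    have hpow : ∀ z A U : ℝ≥0∞, z ≤ A + ε' * U ^ (α/β) →
        z ^ β ≤ c0 * (A ^ β + ε' ^ β * U ^ α) := by
      intro z A U hz
      calc z ^ β ≤ (A + ε' * U ^ (α/β)) ^ β := ENNReal.rpow_le_rpow hz hβ0.le
        _ ≤ c0 * (A ^ β + (ε' * U ^ (α/β)) ^ β) :=
            ENNReal.rpow_add_le_mul_rpow_add_rpow _ _ hβ
        _ = c0 * (A ^ β + ε' ^ β * U ^ α) := by
            rw [ENNReal.mul_rpow_of_nonneg _ _ hβ0.le, ← ENNReal.rpow_mul, hγβ]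
    set G : ℕ → (Fin n → ℝ) → ℝ≥0∞ := fun k x =>
      c0 * c0 * (((‖a x‖₊ : ℝ≥0∞) ^ β + ε' ^ β * (‖u k x‖₊ : ℝ≥0∞) ^ α) +
        ((‖a x‖₊ : ℝ≥0∞) ^ β + ε' ^ β * (‖v x‖₊ : ℝ≥0∞) ^ α)) with hGdef
    have hdG : ∀ᵐ x ∂μ, ∀ k,
        (‖h x (u k x) - h x (v x)‖₊ : ℝ≥0∞) ^ β ≤ G k x := by
      filter_upwards [hptw] with x hx k
      have h1 : (‖h x (u k x) - h x (v x)‖₊ : ℝ≥0∞)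
          ≤ (‖h x (u k x)‖₊ : ℝ≥0∞) + (‖h x (v x)‖₊ : ℝ≥0∞) := by
        exact_mod_cast nnnorm_sub_le _ _
      calc (‖h x (u k x) - h x (v x)‖₊ : ℝ≥0∞) ^ β
          ≤ ((‖h x (u k x)‖₊ : ℝ≥0∞) + (‖h x (v x)‖₊ : ℝ≥0∞)) ^ β :=
            ENNReal.rpow_le_rpow h1 hβ0.le
        _ ≤ c0 * ((‖h x (u k x)‖₊ : ℝ≥0∞) ^ β + (‖h x (v x)‖₊ : ℝ≥0∞) ^ β) :=
            ENNReal.rpow_add_le_mul_rpow_add_rpow _ _ hβ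
        _ ≤ c0 * ((c0 * ((‖a x‖₊:ℝ≥0∞) ^ β + ε' ^ β * (‖u k x‖₊:ℝ≥0∞) ^ α)) +
              (c0 * ((‖a x‖₊:ℝ≥0∞) ^ β + ε' ^ β * (‖v x‖₊:ℝ≥0∞) ^ α))) := by
            gcongr
            · exact hpow _ _ _ (hx _)
            · exact hpow _ _ _ (hx _)
        _ = G k x := by rw [hGdef]; ring
    have hG_meas : ∀ k, AEMeasurable (G k) μ := fun k =>
      ((ha_pm.add ((hu_meas k).const_mul _)).add
        (ha_pm.add (hv_meas.const_mul _))).const_mul _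
    have hcc_ne : c0 * c0 ≠ ∞ := ENNReal.mul_ne_top hc0_ne hc0_ne
    have hXval : ∀ k, ∫⁻ x, G k x ∂μ =
        c0 * c0 * ((Ia + ε' ^ β * ∫⁻ x, (‖u k x‖₊:ℝ≥0∞) ^ α ∂μ) + (Ia + ε' ^ β * Iv)) := by
      intro k
      rw [hGdef]
      simp only
      rw [lintegral_const_mul' _ _ hcc_ne]
      congr 1
      rw [lintegral_add_left' (f := fun x => (‖a x‖₊ : ℝ≥0∞) ^ β + ε' ^ β * (‖u k x‖₊ : ℝ≥0∞) ^ α)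
        (ha_pm.add ((hu_meas k).const_mul _))]
      congr 1
      · rw [lintegral_add_left' ha_pm, lintegral_const_mul' _ _ hε'β_ne]
      · rw [lintegral_add_left' ha_pm, lintegral_const_mul' _ _ hε'β_ne]
    set S := c0 * c0 * ((Ia + ε' ^ β * Iv) + (Ia + ε' ^ β * Iv)) with hSdef
    have hterm_ne : Ia + ε' ^ β * Iv ≠ ∞ :=
      ENNReal.add_ne_top.2 ⟨hIa_ne, ENNReal.mul_ne_top hε'β_ne hIv_ne⟩
    have hS_ne : S ≠ ∞ :=
      ENNReal.mul_ne_top hcc_ne (ENNReal.add_ne_top.2 ⟨hterm_ne, hterm_ne⟩)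
    set Q := S + c0 * c0 * (ε' ^ β * (C:ℝ≥0∞) ^ α) with hQdef
    have hQ_ne : Q ≠ ∞ := ENNReal.add_ne_top.2
      ⟨hS_ne, ENNReal.mul_ne_top hcc_ne (ENNReal.mul_ne_top hε'β_ne hCα)⟩
    have hXQ : ∀ k, ∫⁻ x, G k x ∂μ ≤ Q := by
      intro k
      rw [hXval k, hQdef, hSdef, ← mul_add]
      gcongr c0 * c0 * ?_
      calc (Ia + ε' ^ β * ∫⁻ x, (‖u k x‖₊:ℝ≥0∞) ^ α ∂μ) + (Ia + ε' ^ β * Iv)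
          ≤ (Ia + ε' ^ β * (C:ℝ≥0∞) ^ α) + (Ia + ε' ^ β * Iv) := by
            gcongr; exact hIk k
        _ = (Ia + (Ia + ε' ^ β * Iv)) + ε' ^ β * (C:ℝ≥0∞) ^ α := by ring
        _ ≤ ((Ia + ε' ^ β * Iv) + (Ia + ε' ^ β * Iv)) + ε' ^ β * (C:ℝ≥0∞) ^ α :=
            add_le_add_left (add_le_add_left (self_le_add_right Ia _) _) _
    have hFX : ∀ k, F k ≤ ∫⁻ x, G k x ∂μ := by
      intro k
      apply lintegral_mono_ae
      filter_upwards [hdG] with x hx using hx k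
    have hF_ne : ∀ k, F k ≠ ∞ :=
      fun k => (lt_of_le_of_lt ((hFX k).trans (hXQ k)) (lt_top_iff_ne_top.2 hQ_ne)).ne
    set Y : ℕ → ℝ≥0∞ := fun k =>
      ∫⁻ x, (G k x - (‖h x (u k x) - h x (v x)‖₊ : ℝ≥0∞) ^ β) ∂μ with hYdef
    have hYval : ∀ k, Y k = (∫⁻ x, G k x ∂μ) - F k := by
      intro k
      apply lintegral_sub' (hd_meas k) (hF_ne k)
      filter_upwards [hdG] with x hx using hx k
    have hFQY : ∀ k, F k ≤ Q - Y k := by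
      intro k
      apply ENNReal.le_sub_of_add_le_right
        (ne_top_of_le_ne_top hQ_ne (by rw [hYval k]; exact tsub_le_self.trans (hXQ k)))
      rw [hYval k, add_tsub_cancel_of_le (hFX k)]
      exact hXQ k
    have hGl_tend : ∀ᵐ x ∂μ, Tendsto
        (fun k => G k x - (‖h x (u k x) - h x (v x)‖₊ : ℝ≥0∞) ^ β) atTop
        (𝓝 (c0 * c0 * (((‖a x‖₊:ℝ≥0∞) ^ β + ε' ^ β * (‖v x‖₊:ℝ≥0∞) ^ α) +
          ((‖a x‖₊:ℝ≥0∞) ^ β + ε' ^ β * (‖v x‖₊:ℝ≥0∞) ^ α)))) := by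
      filter_upwards [hcont, hae] with x hx1 hx2
      have h2 : Tendsto (fun k => (‖u k x‖₊:ℝ≥0∞) ^ α) atTop
          (𝓝 ((‖v x‖₊:ℝ≥0∞) ^ α)) :=
        (ENNReal.continuous_rpow_const.tendsto _).comp
          (ENNReal.tendsto_coe.2 ((continuous_nnnorm.tendsto _).comp hx2))
      have hG : Tendsto (fun k => G k x) atTop
          (𝓝 (c0 * c0 * (((‖a x‖₊:ℝ≥0∞) ^ β + ε' ^ β * (‖v x‖₊:ℝ≥0∞) ^ α) +
            ((‖a x‖₊:ℝ≥0∞) ^ β + ε' ^ β * (‖v x‖₊:ℝ≥0∞) ^ α)))) := by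
        apply ENNReal.Tendsto.const_mul _ (Or.inr hcc_ne)
        exact (Tendsto.const_add _ (ENNReal.Tendsto.const_mul h2 (Or.inr hε'β_ne))).add_const _
      have hd0 : Tendsto (fun k => (‖h x (u k x) - h x (v x)‖₊:ℝ≥0∞) ^ β) atTop
          (𝓝 0) := by
        have ht : Tendsto (fun k => h x (u k x) - h x (v x)) atTop (𝓝 0) := by
          have := ((hx1.tendsto (v x)).comp hx2).sub_const (h x (v x))
          rwa [sub_self] at this
        have h3 : Tendsto (fun k => (‖h x (u k x) - h x (v x)‖₊:ℝ≥0∞)) atTop (𝓝 0) := by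
          simpa using ENNReal.tendsto_coe.2 ((continuous_nnnorm.tendsto _).comp ht)
        have h4 := ((ENNReal.continuous_rpow_const (y := β)).tendsto _).comp h3
        rwa [ENNReal.zero_rpow_of_pos hβ0] at h4
      have := ENNReal.Tendsto.sub hG hd0 (Or.inr (by simp))
      simpa using this
    have hSval : S = ∫⁻ x, c0 * c0 * (((‖a x‖₊:ℝ≥0∞) ^ β + ε' ^ β * (‖v x‖₊:ℝ≥0∞) ^ α) +
        ((‖a x‖₊:ℝ≥0∞) ^ β + ε' ^ β * (‖v x‖₊:ℝ≥0∞) ^ α)) ∂μ := by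
      rw [lintegral_const_mul' _ _ hcc_ne,
        lintegral_add_left' (f := fun x => (‖a x‖₊ : ℝ≥0∞) ^ β + ε' ^ β * (‖v x‖₊ : ℝ≥0∞) ^ α)
          (ha_pm.add (hv_meas.const_mul _)),
        lintegral_add_left' ha_pm, lintegral_const_mul' _ _ hε'β_ne, hSdef]
    have hSliminf : S ≤ liminf Y atTop := by
      refine le_trans ?_ (lintegral_liminf_le' (fun k => (hG_meas k).sub (hd_meas k)))
      rw [hSval]
      refine le_of_eq (lintegral_congr_ae ?_)
      filter_upwards [hGl_tend] with x hx
      exact hx.liminf_eq.symm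
    have hQS : Q - S = c0 * c0 * (ε' ^ β * (C:ℝ≥0∞) ^ α) := by
      rw [hQdef]; exact ENNReal.add_sub_cancel_left hS_ne
    calc limsup F atTop ≤ limsup (fun k => Q - Y k) atTop :=
          limsup_le_limsup (Filter.Eventually.of_forall hFQY)
      _ = Q - liminf Y atTop :=
          (Antitone.map_liminf_of_continuousAt
            (f := fun z => Q - z) (fun _ _ hz => tsub_le_tsub_left hz Q) Y
            ((ENNReal.continuous_sub_left hQ_ne).continuousAt)).symm
      _ ≤ Q - S := tsub_le_tsub_left hSliminf Q
      _ = _ := hQS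
  -- conclude limsup F = 0
  have hlimsup0 : limsup F atTop ≤ 0 := by
    have hb : Tendsto (fun m : ℕ => c0 * c0 *
        ((ENNReal.ofReal (1/(m+1))) ^ β * (C:ℝ≥0∞) ^ α)) atTop (𝓝 0) := by
      have h1 : Tendsto (fun m : ℕ => (1:ℝ)/(m+1)) atTop (𝓝 0) :=
        tendsto_one_div_add_atTop_nhds_zero_nat
      have h2 := ENNReal.tendsto_ofReal h1
      have h3 := ((ENNReal.continuous_rpow_const (y := β)).tendsto _).comp h2
      rw [ENNReal.ofReal_zero, ENNReal.zero_rpow_of_pos hβ0] at h3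
      have h4 := ENNReal.Tendsto.mul_const h3 (Or.inr hCα)
      rw [zero_mul] at h4
      have h5 := ENNReal.Tendsto.const_mul h4
        (Or.inr (ENNReal.mul_ne_top hc0_ne hc0_ne))
      rwa [mul_zero] at h5
    exact ge_of_tendsto hb (Filter.Eventually.of_forall fun m => hkey _ (by positivity))
  have hF0 : Tendsto F atTop (𝓝 0) :=
    tendsto_of_le_liminf_of_limsup_le zero_le hlimsup0
  have hcomp : Tendsto (fun k => F k ^ (1/β)) atTop (𝓝 ((0:ℝ≥0∞) ^ (1/β))) :=
    ((ENNReal.continuous_rpow_const (y := 1/β)).tendsto 0).comp hF0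
  rw [ENNReal.zero_rpow_of_pos (by positivity)] at hcomp
  refine hcomp.congr fun k => ?_
  rw [eLpNorm_eq_lintegral_rpow_enorm_toReal hp0 hpt, hpR]
  simp only [hFdef, enorm_eq_nnnorm]
end
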